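/- Let p be an odd prime. The graph G(p) on 𝔽_p², where (a,c) ~ (b,d) iff a ≠ b and ab = c + d, contains no cycle of length 4. -/

import Mathlib

/-- The graph `G(p)`: vertices `𝔽_p²`, with `(a,c) ~ (b,d)` iff `a ≠ b` and `ab = c + d`. -/
def Gp (p : ℕ) : SimpleGraph (ZMod p × ZMod p) where
  Adj u v := u.1 ≠ v.1 ∧ u.1 * v.1 = u.2 + v.2
  symm := by
    constructor
    rintro u v ⟨h1, h2⟩
    refine ⟨h1.symm, ?_⟩
    rw [mul_comm, h2, add_comm]
  loopless := by constructor; rintro u ⟨h1, _⟩; exact h1 rfl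

/-- `G(p)` contains no cycle of length 4. -/
theorem stmt9 (p : ℕ) [Fact p.Prime] (hodd : Odd p)
    (a b c d : ZMod p × ZMod p)
    (hab : a ≠ b) (hac : a ≠ c) (had : a ≠ d) (hbc : b ≠ c) (hbd : b ≠ d) (hcd : c ≠ d) :
    ¬ ((Gp p).Adj a b ∧ (Gp p).Adj b c ∧ (Gp p).Adj c d ∧ (Gp p).Adj d a) := by
  rintro ⟨⟨h1, e1⟩, ⟨h2, e2⟩, ⟨h3, e3⟩, ⟨h4, e4⟩⟩
  have key : (a.1 - c.1) * (b.1 - d.1) = 0 := by ring_nf; linear_combination e1 - e2 + e3 - e4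
  rcases mul_eq_zero.1 key with h | h
  · have hac1 : a.1 = c.1 := sub_eq_zero.1 h
    have hac2 : a.2 = c.2 := by
      have : a.2 + b.2 = c.2 + b.2 := by rw [← e1, hac1, mul_comm, e2, add_comm]
      exact add_right_cancel this
    exact hac (Prod.ext hac1 hac2)
  · have hbd1 : b.1 = d.1 := sub_eq_zero.1 h
    have hbd2 : b.2 = d.2 := by
      have : b.2 + c.2 = d.2 + c.2 := by rw [← e2, hbd1, mul_comm, e3, add_comm]
      exact add_right_cancel this
    exact hbd (Prod.ext hbd1 hbd2)
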